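/- For j > 1, the longest prefix of the Fibonacci infinite word that is an abelian repetition of period F_j has length F_j(F_{j+1} + F_{j-1} + 1) - 2 if j is even, and F_j(F_{j+1} + F_{j-1}) - 2 if j is odd. -/

import Mathlib

set_option maxHeartbeats 1000000


open scoped Classical

/-- Fibonacci numbers with the indexing `F 0 = 1`, `F 1 = 1`, `F (j+1) = F j + F (j-1)`. -/
def F (j : ℕ) : ℕ := Nat.fib (j + 1)

/-- The Parikh vector (number of `a`'s, number of `b`'s) of the length-`len` factor of the
Sturmian word `s_{α,0}` starting at position `n`, where the letter at position `p ≥ 1` is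
`a` iff `{pα} ≥ {-α} = 1 - α`. -/
noncomputable def sturmParikh (α : ℝ) (n len : ℕ) : ℕ × ℕ :=
  (((Finset.range len).filter fun i => 1 - α ≤ Int.fract (((n + i : ℕ) : ℝ) * α)).card,
   ((Finset.range len).filter fun i => Int.fract (((n + i : ℕ) : ℝ) * α) < 1 - α).card)

/-- Componentwise order on Parikh vectors. -/
def PLe (p q : ℕ × ℕ) : Prop := p.1 ≤ q.1 ∧ p.2 ≤ q.2

/-- The prefix of length `L` of the Sturmian word `s_{α,0}` is an abelian repetition of
period `m`: it factors as `u_0 u_1 ⋯ u_{b} u_{b+1}` where the `b ≥ 2` middle blocks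
`u_1, …, u_b` have length `m` and a common Parikh vector `P`, and the Parikh vectors of the
head `u_0` and the tail `u_{b+1}` (both of length `< m`, possibly empty) are componentwise
contained in `P`. -/
noncomputable def IsAbelianRepPrefix (α : ℝ) (m L : ℕ) : Prop :=
  ∃ h b : ℕ, h < m ∧ 2 ≤ b ∧ h + b * m ≤ L ∧ L < h + (b + 1) * m ∧
    (∀ j < b, sturmParikh α (1 + h + j * m) m = sturmParikh α (1 + h) m) ∧
    PLe (sturmParikh α 1 h) (sturmParikh α (1 + h) m) ∧
    PLe (sturmParikh α (1 + h + b * m) (L - (h + b * m))) (sturmParikh α (1 + h) m)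

noncomputable def aa : ℝ := (Real.sqrt 5 - 1) / 2

lemma aa_sq : aa ^ 2 = 1 - aa := by
  have h5 : Real.sqrt 5 ^ 2 = 5 := Real.sq_sqrt (by norm_num)
  unfold aa; linear_combination h5 / 4

lemma aa_gt : (0.6 : ℝ) < aa := by
  have h2 : (2.2:ℝ) < Real.sqrt 5 := by
    have := Real.lt_sqrt (x := 2.2) (y := 5) (by norm_num)
    rw [this]; norm_num
  unfold aa; linarith

lemma aa_lt : aa < (0.7 : ℝ) := by
  have h2 : Real.sqrt 5 < 2.4 := by
    have := Real.sqrt_lt' (x := 5) (y := 2.4) (by norm_num)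
    rw [this]; norm_num
  unfold aa; linarith

lemma aa_pos : (0:ℝ) < aa := by linarith [aa_gt]
lemma aa_lt_one : aa < 1 := by linarith [aa_lt]

lemma fib_aa (n : ℕ) : (Nat.fib (n+1) : ℝ) * aa = Nat.fib n + (-1)^n * aa^(n+1) := by
  induction n with
  | zero => simp
  | succ n ih =>
    have h2 : aa ^ 2 = 1 - aa := aa_sq
    rw [Nat.fib_add_two]
    push_cast
    linear_combination (-aa) * ih + (Nat.fib (n+1) : ℝ) * h2

lemma ph_pow (n : ℕ) : (aa+1)^(n+1) = Nat.fib (n+1) * (aa+1) + Nat.fib n := by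
  induction n with
  | zero => simp
  | succ n ih =>
    have h2 : aa ^ 2 = 1 - aa := aa_sq
    rw [Nat.fib_add_two, pow_succ]
    push_cast
    linear_combination (aa+1) * ih + (Nat.fib (n+1) : ℝ) * h2

lemma aaph (n : ℕ) : aa^n * (aa+1)^n = 1 := by
  rw [← mul_pow]
  have h2 : aa ^ 2 = 1 - aa := aa_sq
  have : aa * (aa + 1) = 1 := by nlinarith
  rw [this, one_pow]

lemma Lu_eps (n : ℕ) :
    ((Nat.fib (n+2) + Nat.fib n : ℕ) : ℝ) * aa^(n+1) = 1 - (-1)^n * (aa^(n+1))^2 := by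
  have h1 := ph_pow n
  have h2 := aaph (n+1)
  have h3 := fib_aa n
  rw [Nat.fib_add_two]
  push_cast
  linear_combination h2 - aa^(n+1) * h1 - aa^(n+1) * h3

noncomputable def A (n : ℕ) : ℤ := ⌊(n:ℝ) * aa⌋

lemma A_zero : A 0 = 0 := by simp [A]
lemma A_one : A 1 = 0 := by
  simp only [A, Nat.cast_one, one_mul]
  rw [Int.floor_eq_zero_iff, Set.mem_Ico]
  exact ⟨aa_pos.le, aa_lt_one⟩

lemma A_add (n len : ℕ) :
    A (n + len) = A n + ⌊Int.fract ((n:ℝ) * aa) + (len:ℝ) * aa⌋ := by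
  have key : ((n + len : ℕ) : ℝ) * aa
      = (Int.fract ((n:ℝ) * aa) + (len:ℝ) * aa) + (A n : ℝ) := by
    have h := Int.floor_add_fract ((n:ℝ) * aa)
    unfold A
    push_cast
    linarith
  unfold A
  rw [key, Int.floor_add_intCast]
  simp only [A]
  ring

lemma fract_add (n len : ℕ) :
    Int.fract (((n + len : ℕ) : ℝ) * aa)
      = Int.fract (Int.fract ((n:ℝ) * aa) + (len:ℝ) * aa) := by
  have key : ((n + len : ℕ) : ℝ) * aa
      = (Int.fract ((n:ℝ) * aa) + (len:ℝ) * aa) + (A n : ℝ) := by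
    have h := Int.floor_add_fract ((n:ℝ) * aa)
    unfold A
    push_cast
    linarith
  rw [key, Int.fract_add_intCast]

lemma A_succ (p : ℕ) :
    A (p + 1) = A p + (if 1 - aa ≤ Int.fract ((p:ℝ) * aa) then 1 else 0) := by
  rw [A_add p 1]
  congr 1
  have h0 := Int.fract_nonneg ((p:ℝ) * aa)
  have h1 := Int.fract_lt_one ((p:ℝ) * aa)
  by_cases hc : 1 - aa ≤ Int.fract ((p:ℝ) * aa)
  · rw [if_pos hc]
    push_cast
    rw [one_mul]
    rw [Int.floor_eq_iff]
    constructor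
    · push_cast; linarith
    · push_cast; linarith [aa_lt_one]
  · rw [if_neg hc]
    push_cast
    rw [one_mul]
    rw [Int.floor_eq_zero_iff, Set.mem_Ico]
    push_neg at hc
    constructor
    · linarith [aa_pos]
    · linarith

lemma parikh_fst (n len : ℕ) :
    ((sturmParikh aa n len).1 : ℤ) = A (n + len) - A n := by
  induction len with
  | zero => simp [sturmParikh]
  | succ l ih =>
    simp only [sturmParikh] at ih ⊢
    rw [Finset.range_add_one, Finset.filter_insert]
    have hstep : A (n + (l + 1)) = A (n + l) + (if 1 - aa ≤ Int.fract (((n + l : ℕ):ℝ) * aa) then 1 else 0) := by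
      rw [show n + (l+1) = (n + l) + 1 by ring]
      exact A_succ (n + l)
    by_cases hc : 1 - aa ≤ Int.fract (((n + l : ℕ) : ℝ) * aa)
    · rw [if_pos (by exact_mod_cast hc)]
      rw [Finset.card_insert_of_notMem (by simp)]
      rw [hstep, if_pos hc]
      push_cast
      push_cast at ih
      linarith
    · rw [if_neg (by exact_mod_cast hc)]
      rw [hstep, if_neg hc]
      push_cast at ih ⊢
      linarith

lemma parikh_add (n len : ℕ) :
    (sturmParikh aa n len).1 + (sturmParikh aa n len).2 = len := by
  simp only [sturmParikh]
  have h := Finset.card_filter_add_card_filter_not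
    (s := Finset.range len)
    (p := fun i => 1 - aa ≤ Int.fract (((n + i : ℕ) : ℝ) * aa))
  rw [Finset.card_range] at h
  have e : Finset.filter (fun i => Int.fract (((n+i:ℕ):ℝ) * aa) < 1 - aa) (Finset.range len)
      = Finset.filter (fun i => ¬ (1 - aa ≤ Int.fract (((n+i:ℕ):ℝ) * aa))) (Finset.range len) :=
    Finset.filter_congr (fun i _ => not_le.symm)
  rw [e]
  convert h using 3

lemma parikh_ext (n n' len : ℕ)
    (hA : A (n + len) - A n = A (n' + len) - A n') :
    sturmParikh aa n len = sturmParikh aa n' len := by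
  have h1 := parikh_fst n len
  have h2 := parikh_fst n' len
  have hfst : (sturmParikh aa n len).1 = (sturmParikh aa n' len).1 := by
    rw [hA] at h1; exact_mod_cast h1.trans h2.symm
  have ha := parikh_add n len
  have hb := parikh_add n' len
  ext
  · exact hfst
  · omega

lemma cnt (j n : ℕ) :
    A (n + Nat.fib (j+1)) = A n + Nat.fib j
      + ⌊Int.fract ((n:ℝ) * aa) + (-1)^j * aa^(j+1)⌋ := by
  rw [A_add, fib_aa j]
  have key : Int.fract ((n:ℝ) * aa) + ((Nat.fib j : ℝ) + (-1)^j * aa^(j+1))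
      = (Int.fract ((n:ℝ) * aa) + (-1)^j * aa^(j+1)) + ((Nat.fib j : ℤ) : ℝ) := by
    push_cast; ring
  rw [key, Int.floor_add_intCast]
  ring

lemma cnt_tail (j n : ℕ) :
    A (n + (Nat.fib (j+1) - 1)) = A n + Nat.fib j
      + ⌊Int.fract ((n:ℝ) * aa) + ((-1)^j * aa^(j+1) - aa)⌋ := by
  rw [A_add]
  have hf : 1 ≤ Nat.fib (j+1) := Nat.fib_pos.mpr (by omega)
  have hc : ((Nat.fib (j+1) - 1 : ℕ) : ℝ) = (Nat.fib (j+1) : ℝ) - 1 := by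
    push_cast [hf]; ring
  have key : Int.fract ((n:ℝ) * aa) + ((Nat.fib (j+1) - 1 : ℕ) : ℝ) * aa
      = (Int.fract ((n:ℝ) * aa) + ((-1)^j * aa^(j+1) - aa)) + ((Nat.fib j : ℤ) : ℝ) := by
    rw [hc]
    have := fib_aa j
    push_cast
    linarith
  rw [key, Int.floor_add_intCast]
  ring

lemma fract_step (j n : ℕ) :
    Int.fract (((n + Nat.fib (j+1) : ℕ) : ℝ) * aa)
      = Int.fract (Int.fract ((n:ℝ) * aa) + (-1)^j * aa^(j+1)) := by
  rw [fract_add, fib_aa j]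
  have key : Int.fract ((n:ℝ) * aa) + ((Nat.fib j : ℝ) + (-1)^j * aa^(j+1))
      = (Int.fract ((n:ℝ) * aa) + (-1)^j * aa^(j+1)) + ((Nat.fib j : ℤ) : ℝ) := by
    push_cast; ring
  rw [key, Int.fract_add_intCast]

lemma fract_nm (j c : ℕ) :
    Int.fract (((c * Nat.fib (j+1) : ℕ) : ℝ) * aa)
      = Int.fract ((c:ℝ) * ((-1)^j * aa^(j+1))) := by
  have key : ((c * Nat.fib (j+1) : ℕ) : ℝ) * aa
      = (c:ℝ) * ((-1)^j * aa^(j+1)) + ((c * Nat.fib j : ℕ) : ℤ) := by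
    push_cast
    have := fib_aa j
    nlinarith [fib_aa j]
  rw [key, Int.fract_add_intCast]

lemma BA : ∀ k : ℕ, 1 ≤ k → ∀ n : ℕ, 1 ≤ n → n ≤ Nat.fib (k+1) →
    ∀ q : ℤ, aa^(k+1) ≤ |(n:ℝ) * (aa+1) - q| := by
  intro k hk
  induction k, hk using Nat.le_induction with
  | base =>
    intro n hn1 hn2 q
    interval_cases n
    · rcases le_or_gt q 1 with hq | hq
      · have : ((q:ℝ)) ≤ 1 := by exact_mod_cast hq
        have h2 := aa_sq
        rw [le_abs]
        left
        push_cast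
        nlinarith [aa_pos, aa_lt_one]
      · have : (2:ℝ) ≤ (q:ℝ) := by exact_mod_cast hq
        have h2 := aa_sq
        rw [le_abs]
        right
        push_cast
        nlinarith [aa_pos, aa_lt_one]
  | succ k hk ih =>
    intro n hn1 hn2 q
    rcases le_or_gt n (Nat.fib (k+1)) with hle | hgt
    · calc aa^(k+2) ≤ aa^(k+1) := by
            apply pow_le_pow_of_le_one aa_pos.le aa_lt_one.le
            omega
        _ ≤ _ := ih n hn1 hle q
    · by_contra hcon
      push_neg at hcon
      rw [abs_lt] at hcon
      obtain ⟨hc1, hc2⟩ := hcon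
      have heps3 : aa^(k+2) ≤ aa^3 := by
        apply pow_le_pow_of_le_one aa_pos.le aa_lt_one.le
        omega
      have haa3 : aa^3 < aa := by nlinarith [aa_sq, aa_pos, aa_lt_one]
      have h2aa3 : 2*aa^3 < 1 := by
        have h3 : aa^3 = aa*(1-aa) := by rw [← aa_sq]; ring
        nlinarith [sq_nonneg (2*aa-1)]
      have hn1R : (1:ℝ) ≤ (n:ℝ) := by exact_mod_cast hn1
      have hq1 : (0:ℝ) < (q:ℝ) - n := by nlinarith [aa_pos]
      have hnfib : (n:ℝ) ≤ (Nat.fib (k+2) : ℝ) := by exact_mod_cast hn2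
      have hfa := fib_aa (k+1)
      have hsig : (-1:ℝ)^(k+1) * aa^(k+1+1) ≤ aa^(k+2) := by
        rcases Nat.even_or_odd (k+1) with he | ho
        · rw [he.neg_one_pow, one_mul]
        · rw [ho.neg_one_pow]
          nlinarith [pow_pos aa_pos (k+2)]
      have hq2 : (q:ℝ) - n < (Nat.fib (k+1) : ℝ) + 1 := by
        have h1 : (n:ℝ) * aa ≤ (Nat.fib (k+2) : ℝ) * aa :=
          mul_le_mul_of_nonneg_right hnfib aa_pos.le
        have h2 : (Nat.fib (k+1+1) : ℝ) * aa ≤ (Nat.fib (k+1) : ℝ) + aa^(k+2) := by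
          rw [hfa]; linarith
        have h3 : aa^(k+2) ≤ aa^3 := heps3
        have : (k:ℕ) + 1 + 1 = k + 2 := by ring
        rw [this] at h2
        linarith
      set q' : ℤ := q - n with hq'
      have hq'pos : 0 < q' := by
        have h : (0:ℝ) < ((q':ℤ):ℝ) := by push_cast [hq']; linarith
        exact_mod_cast h
      have hq'le : q' < (Nat.fib (k+1) : ℤ) + 1 := by
        have h : ((q':ℤ):ℝ) < ((Nat.fib (k+1) : ℤ):ℝ) + 1 := by push_cast [hq']; push_cast; linarith
        exact_mod_cast h
      set n' : ℕ := q'.toNat with hn'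
      have hn'1 : 1 ≤ n' := by omega
      have hn'2 : n' ≤ Nat.fib (k+1) := by omega
      have hn'Z : ((n':ℕ):ℤ) = q - (n:ℤ) := by
        rw [hn', Int.toNat_of_nonneg hq'pos.le]
      have hn'R : ((n':ℕ):ℝ) = (q:ℝ) - n := by exact_mod_cast hn'Z
      have hIH := ih n' hn'1 hn'2 n
      have hkey : ((n':ℕ):ℝ) * (aa+1) - ((n:ℕ):ℤ) = (aa+1) * ((q:ℝ) - (n:ℝ)*(aa+1)) := by
        rw [hn'R]
        push_cast
        linear_combination (n:ℝ) * aa_sq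
      have habs : |((n':ℕ):ℝ) * (aa+1) - ((n:ℕ):ℤ)| = (aa+1) * |(n:ℝ)*(aa+1) - q| := by
        rw [hkey, abs_mul, abs_of_pos (by linarith [aa_pos]), abs_sub_comm]
      have hfin : (aa+1) * |(n:ℝ)*(aa+1) - q| < (aa+1) * aa^(k+2) := by
        apply mul_lt_mul_of_pos_left _ (by linarith [aa_pos])
        rw [abs_lt]; exact ⟨hc1, hc2⟩
      have hph : (aa+1) * aa^(k+2) = aa^(k+1) := by
        have h1 : aa * (aa+1) = 1 := by nlinarith [aa_sq]
        calc (aa+1) * aa^(k+2) = (aa * (aa+1)) * aa^(k+1) := by ring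
          _ = aa^(k+1) := by rw [h1]; ring
      rw [habs] at hIH
      linarith

lemma BA' (j n : ℕ) (hj : 1 ≤ j) (h1 : 1 ≤ n) (h2 : n ≤ Nat.fib (j+1)) :
    aa^(j+1) ≤ Int.fract ((n:ℝ) * aa) ∧ Int.fract ((n:ℝ) * aa) ≤ 1 - aa^(j+1) := by
  have hrw : ∀ q : ℤ, (n:ℝ) * aa - q = (n:ℝ) * (aa+1) - (q + n) := by
    intro q; push_cast; ring
  constructor
  · have hba := BA j hj n h1 h2 (⌊(n:ℝ) * aa⌋ + n)
    have : (n:ℝ) * (aa+1) - ((⌊(n:ℝ) * aa⌋ + n : ℤ)) = Int.fract ((n:ℝ) * aa) := by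
      rw [Int.fract]; push_cast; ring
    rw [this] at hba
    rwa [abs_of_nonneg (Int.fract_nonneg _)] at hba
  · have hba := BA j hj n h1 h2 (⌊(n:ℝ) * aa⌋ + 1 + n)
    have : (n:ℝ) * (aa+1) - ((⌊(n:ℝ) * aa⌋ + 1 + n : ℤ)) = Int.fract ((n:ℝ) * aa) - 1 := by
      rw [Int.fract]; push_cast; ring
    rw [this] at hba
    rw [abs_of_nonpos (by linarith [Int.fract_lt_one ((n:ℝ)*aa)])] at hba
    linarith

lemma fib_ge_two (j : ℕ) (hj : 2 ≤ j) : 2 ≤ Nat.fib (j+1) := by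
  have h := Nat.fib_mono (show 3 ≤ j+1 by omega)
  simpa [show Nat.fib 3 = 2 from rfl] using h

lemma fib_ge_one (j : ℕ) (hj : 1 ≤ j) : 1 ≤ Nat.fib j := Nat.fib_pos.mpr (by omega)

lemma eps_facts (j : ℕ) (hj : 2 ≤ j) :
    0 < aa^(j+1) ∧ aa^(j+1) ≤ aa^3 ∧ aa^3 < aa ∧ 2*aa^3 < 1 := by
  refine ⟨pow_pos aa_pos _, ?_, ?_, ?_⟩
  · exact pow_le_pow_of_le_one aa_pos.le aa_lt_one.le (by omega)
  · nlinarith [aa_sq, aa_pos, aa_lt_one]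
  · have h3 : aa^3 = aa*(1-aa) := by rw [← aa_sq]; ring
    nlinarith [sq_nonneg (2*aa-1)]

lemma main_even (j : ℕ) (hj : 2 ≤ j) (hje : Even j) :
    IsGreatest {L : ℕ | IsAbelianRepPrefix aa (Nat.fib (j+1)) L}
      (Nat.fib (j+1) * (Nat.fib (j+2) + Nat.fib j + 1) - 2) := by
  obtain ⟨heps_pos, heps3, haa3, h2aa3⟩ := eps_facts j hj
  have hsq := aa_sq
  have hgt := aa_gt
  have hlt := aa_lt
  have hm2 : 2 ≤ Nat.fib (j+1) := fib_ge_two j hj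
  have hK1 : 1 ≤ Nat.fib j := fib_ge_one j (by omega)
  have hLu4 : 4 ≤ Nat.fib (j+2) + Nat.fib j := by
    have h := Nat.fib_mono (show 4 ≤ j+2 by omega)
    have h4 : Nat.fib 4 = 3 := rfl
    omega
  have hsign : ((-1:ℝ))^j = 1 := hje.neg_one_pow
  have hLuR : ((Nat.fib (j+2) + Nat.fib j : ℕ):ℝ) * aa^(j+1) = 1 - (aa^(j+1))^2 := by
    have h := Lu_eps j
    rw [hsign] at h
    rw [h]; ring
  have hepslt1 : aa^(j+1) < 1 := by linarith
  have heps_sq : (aa^(j+1))^2 < aa^(j+1) := by nlinarith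
  have hepsq6 : (aa^(j+1))^2 ≤ aa^2 := by nlinarith
  have key : ∀ c : ℕ, 1 ≤ c → c ≤ Nat.fib (j+2) + Nat.fib j - 1 →
      A (c*Nat.fib (j+1) + Nat.fib (j+1)) - A (c*Nat.fib (j+1)) = (Nat.fib j : ℤ) := by
    intro c hc1 hc2
    have hcnt := cnt j (c*Nat.fib (j+1))
    rw [hsign, one_mul] at hcnt
    have hfr := fract_nm j c
    rw [hsign, one_mul] at hfr
    have hcR : (c:ℝ) ≤ ((Nat.fib (j+2) + Nat.fib j : ℕ):ℝ) - 1 := by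
      have h : ((c:ℕ):ℝ) ≤ ((Nat.fib (j+2) + Nat.fib j - 1:ℕ):ℝ) := by exact_mod_cast hc2
      rw [Nat.cast_sub (by omega)] at h
      exact_mod_cast h
    have hcub : (c:ℝ) * aa^(j+1) ≤ 1 - (aa^(j+1))^2 - aa^(j+1) := by
      nlinarith
    have hclb : 0 ≤ (c:ℝ) * aa^(j+1) := by positivity
    have hfr2 : Int.fract (((c*Nat.fib (j+1):ℕ):ℝ) * aa) = (c:ℝ) * aa^(j+1) := by
      rw [hfr]
      exact Int.fract_eq_self.mpr ⟨hclb, by nlinarith⟩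
    rw [hfr2] at hcnt
    have hfl : ⌊(c:ℝ) * aa^(j+1) + aa^(j+1)⌋ = 0 := by
      rw [Int.floor_eq_zero_iff, Set.mem_Ico]
      constructor
      · linarith
      · nlinarith
    rw [hfl] at hcnt
    omega
  have hAm : A (Nat.fib (j+1)) = (Nat.fib j : ℤ) := by
    have hcnt := cnt j 0
    rw [hsign, one_mul] at hcnt
    simp only [Nat.cast_zero, zero_mul, Int.fract_zero, zero_add, A_zero] at hcnt
    have hfl : ⌊aa^(j+1)⌋ = 0 := by
      rw [Int.floor_eq_zero_iff, Set.mem_Ico]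
      exact ⟨by linarith, by linarith⟩
    rw [hfl] at hcnt
    omega
  constructor
  · -- membership
    show IsAbelianRepPrefix aa (Nat.fib (j+1)) _
    have i2 : Nat.fib (j+1)*(Nat.fib (j+2) + Nat.fib j+1)
        = (Nat.fib (j+2) + Nat.fib j)*Nat.fib (j+1) + Nat.fib (j+1) := by
      rw [Nat.mul_comm]; ring
    have i1 : (Nat.fib (j+2) + Nat.fib j - 1)*Nat.fib (j+1)
        = (Nat.fib (j+2) + Nat.fib j)*Nat.fib (j+1) - Nat.fib (j+1) := by
      have h := Nat.sub_one_mul (Nat.fib (j+2) + Nat.fib j) (Nat.fib (j+1))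
      omega
    have e4 : Nat.fib (j+1) ≤ (Nat.fib (j+2) + Nat.fib j)*Nat.fib (j+1) := by
      calc Nat.fib (j+1) = 1*Nat.fib (j+1) := (one_mul _).symm
        _ ≤ _ := Nat.mul_le_mul_right _ (by omega)
    have i5 : (Nat.fib (j+2) + Nat.fib j - 1 + 1)*Nat.fib (j+1)
        = (Nat.fib (j+2) + Nat.fib j)*Nat.fib (j+1) := by
      rw [show Nat.fib (j+2) + Nat.fib j - 1 + 1 = Nat.fib (j+2) + Nat.fib j by omega]
    refine ⟨Nat.fib (j+1)-1, Nat.fib (j+2) + Nat.fib j-1, by omega, by omega, by omega,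
      by omega, ?_, ?_, ?_⟩
    · -- blocks
      intro t ht
      have i3 : (t+1)*Nat.fib (j+1) = t*Nat.fib (j+1) + Nat.fib (j+1) := by ring
      rw [show 1+(Nat.fib (j+1)-1)+t*Nat.fib (j+1) = (t+1)*Nat.fib (j+1) by omega,
        show 1+(Nat.fib (j+1)-1) = 1*Nat.fib (j+1) by omega]
      apply parikh_ext
      rw [key (t+1) (by omega) (by omega), key 1 (by omega) (by omega)]
    · -- head
      rw [show 1+(Nat.fib (j+1)-1) = 1*Nat.fib (j+1) by omega]
      have hfb := parikh_fst (1*Nat.fib (j+1)) (Nat.fib (j+1))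
      rw [key 1 (by omega) (by omega)] at hfb
      have hab := parikh_add (1*Nat.fib (j+1)) (Nat.fib (j+1))
      have hfh := parikh_fst 1 (Nat.fib (j+1)-1)
      rw [show 1+(Nat.fib (j+1)-1) = Nat.fib (j+1) by omega, hAm, A_one] at hfh
      have hah := parikh_add 1 (Nat.fib (j+1)-1)
      constructor
      · omega
      · omega
    · -- tail
      have i1' : (Nat.fib (j+2) + Nat.fib j - 1)*Nat.fib (j+1)
          = (Nat.fib (j+2) + Nat.fib j)*Nat.fib (j+1) - Nat.fib (j+1) := i1
      rw [show 1+(Nat.fib (j+1)-1)+(Nat.fib (j+2) + Nat.fib j-1)*Nat.fib (j+1)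
            = (Nat.fib (j+2) + Nat.fib j)*Nat.fib (j+1) by omega,
        show Nat.fib (j+1)*(Nat.fib (j+2) + Nat.fib j+1) - 2
            - ((Nat.fib (j+1)-1) + (Nat.fib (j+2) + Nat.fib j-1)*Nat.fib (j+1))
            = Nat.fib (j+1)-1 by omega,
        show 1+(Nat.fib (j+1)-1) = 1*Nat.fib (j+1) by omega]
      have hft := parikh_fst ((Nat.fib (j+2) + Nat.fib j)*Nat.fib (j+1)) (Nat.fib (j+1)-1)
      have hcntt := cnt_tail j ((Nat.fib (j+2) + Nat.fib j)*Nat.fib (j+1))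
      rw [hsign, one_mul] at hcntt
      have hfr := fract_nm j (Nat.fib (j+2) + Nat.fib j)
      rw [hsign, one_mul] at hfr
      have hfr2 : Int.fract ((((Nat.fib (j+2) + Nat.fib j)*Nat.fib (j+1):ℕ):ℝ) * aa)
          = 1 - (aa^(j+1))^2 := by
        rw [hfr, hLuR]
        exact Int.fract_eq_self.mpr ⟨by nlinarith, by nlinarith⟩
      rw [hfr2] at hcntt
      have hfl : ⌊1 - (aa^(j+1))^2 + (aa^(j+1) - aa)⌋ = 0 := by
        rw [Int.floor_eq_zero_iff, Set.mem_Ico]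
        constructor
        · nlinarith
        · nlinarith
      rw [hfl] at hcntt
      have hat := parikh_add ((Nat.fib (j+2) + Nat.fib j)*Nat.fib (j+1)) (Nat.fib (j+1)-1)
      have hfb := parikh_fst (1*Nat.fib (j+1)) (Nat.fib (j+1))
      rw [key 1 (by omega) (by omega)] at hfb
      have hab := parikh_add (1*Nat.fib (j+1)) (Nat.fib (j+1))
      constructor
      · omega
      · omega
  · -- upper bound
    intro L hL
    obtain ⟨h, b, hh, hb2, hlb, hub, hblocks, _, _⟩ := hL
    set θ := Int.fract (((1+h:ℕ):ℝ) * aa) with hθdef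
    have hBA := BA' j (1+h) (by omega) (by omega) (by omega)
    have hθ0 : 0 ≤ θ := Int.fract_nonneg _
    have hθ1 : θ < 1 := Int.fract_lt_one _
    have hθe : aa^(j+1) ≤ θ := hBA.1
    have hfl : ∀ t, t < b →
        ⌊Int.fract (((1+h+t*Nat.fib (j+1):ℕ):ℝ) * aa) + aa^(j+1)⌋ = ⌊θ + aa^(j+1)⌋ := by
      intro t ht
      have hp := hblocks t ht
      have h1 := parikh_fst (1+h+t*Nat.fib (j+1)) (Nat.fib (j+1))
      have h2 := parikh_fst (1+h) (Nat.fib (j+1))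
      rw [hp] at h1
      have hc1 := cnt j (1+h+t*Nat.fib (j+1))
      have hc2 := cnt j (1+h)
      rw [hsign, one_mul] at hc1 hc2
      rw [← hθdef] at hc2
      omega
    have hstep0 : ⌊θ + aa^(j+1)⌋ = 0 := by
      rcases lt_or_ge θ (1 - aa^(j+1)) with hcase | hcase
      · rw [Int.floor_eq_zero_iff, Set.mem_Ico]
        exact ⟨by linarith, by linarith⟩
      · exfalso
        have hR1 : ⌊θ + aa^(j+1)⌋ = 1 := by
          rw [Int.floor_eq_iff]
          constructor
          · push_cast; linarith
          · push_cast; linarith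
        have hfr1 : Int.fract (((1+h+1*Nat.fib (j+1):ℕ):ℝ) * aa) = θ + aa^(j+1) - 1 := by
          rw [show 1+h+1*Nat.fib (j+1) = (1+h)+Nat.fib (j+1) by ring]
          rw [fract_step j (1+h), hsign, one_mul]
          rw [← hθdef, ← Int.self_sub_floor, hR1]
          push_cast
          ring
        have hf1 := hfl 1 (by omega)
        rw [hfr1] at hf1
        have hL0 : ⌊θ + aa^(j+1) - 1 + aa^(j+1)⌋ = 0 := by
          rw [Int.floor_eq_zero_iff, Set.mem_Ico]
          constructor
          · linarith
          · linarith
        omega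
    have hθlt : θ < 1 - aa^(j+1) := by
      rw [Int.floor_eq_zero_iff, Set.mem_Ico] at hstep0
      linarith [hstep0.2]
    have hstepB : ∀ t, t < b →
        Int.fract (((1+h+t*Nat.fib (j+1):ℕ):ℝ) * aa) = θ + t*aa^(j+1) ∧
        θ + t*aa^(j+1) < 1 - aa^(j+1) := by
      intro t
      induction t with
      | zero =>
        intro _
        constructor
        · rw [show 1+h+0*Nat.fib (j+1) = 1+h by ring, ← hθdef]
          push_cast
          ring
        · push_cast
          linarith
      | succ t ih =>
        intro ht
        obtain ⟨ihf, ihlt⟩ := ih (by omega)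
        have h0t : 0 ≤ θ + t*aa^(j+1) := by
          have hge : 0 ≤ (t:ℝ)*aa^(j+1) := by positivity
          linarith
        have hfr : Int.fract (((1+h+(t+1)*Nat.fib (j+1):ℕ):ℝ) * aa)
            = θ + (t+1:ℕ)*aa^(j+1) := by
          rw [show 1+h+(t+1)*Nat.fib (j+1) = (1+h+t*Nat.fib (j+1))+Nat.fib (j+1) by ring]
          rw [fract_step j (1+h+t*Nat.fib (j+1)), hsign, one_mul, ihf]
          rw [Int.fract_eq_self.mpr ⟨by linarith, by linarith⟩]
          push_cast
          ring
        have hf := hfl (t+1) ht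
        rw [hfr] at hf
        rw [hstep0] at hf
        rw [Int.floor_eq_zero_iff, Set.mem_Ico] at hf
        refine ⟨hfr, ?_⟩
        have := hf.2
        push_cast at this ⊢
        linarith
    have hfin := hstepB (b-1) (by omega)
    have hcast : ((b-1:ℕ):ℝ) = (b:ℝ) - 1 := by
      rw [Nat.cast_sub (by omega)]; norm_num
    have hbound : ((b:ℝ)+1) * aa^(j+1) < 1 := by
      have h2' := hfin.2
      rw [hcast] at h2'
      nlinarith
    have hblt : (b:ℝ) + 1 < ((Nat.fib (j+2) + Nat.fib j:ℕ):ℝ) + 1 := by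
      have h1 : ((b:ℝ)+1) * aa^(j+1) < (((Nat.fib (j+2) + Nat.fib j:ℕ):ℝ)+1) * aa^(j+1) := by
        nlinarith
      exact lt_of_mul_lt_mul_right (by linarith [h1]) heps_pos.le
    have hbn : b + 1 < Nat.fib (j+2) + Nat.fib j + 1 := by exact_mod_cast hblt
    have hmul : (b+1)*Nat.fib (j+1) ≤ (Nat.fib (j+2) + Nat.fib j)*Nat.fib (j+1) :=
      Nat.mul_le_mul_right _ (by omega)
    have i2 : Nat.fib (j+1)*(Nat.fib (j+2) + Nat.fib j+1)
        = (Nat.fib (j+2) + Nat.fib j)*Nat.fib (j+1) + Nat.fib (j+1) := by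
      rw [Nat.mul_comm]; ring
    omega

lemma aa_lt62 : aa < 0.62 := by nlinarith [aa_sq, sq_nonneg (aa - 0.62), aa_pos]

lemma aa_cube : aa^3 = 2*aa - 1 := by linear_combination (aa - 1) * aa_sq

lemma main_odd (j : ℕ) (hj : 3 ≤ j) (hjo : Odd j) :
    IsGreatest {L : ℕ | IsAbelianRepPrefix aa (Nat.fib (j+1)) L}
      (Nat.fib (j+1) * (Nat.fib (j+2) + Nat.fib j) - 2) := by
  obtain ⟨heps_pos, heps3, haa3, h2aa3⟩ := eps_facts j (by omega)
  have hsq := aa_sq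
  have hgt := aa_gt
  have hlt := aa_lt62
  have hcube := aa_cube
  have hm2 : 2 ≤ Nat.fib (j+1) := fib_ge_two j (by omega)
  have hK2 : 2 ≤ Nat.fib j := by
    have h := Nat.fib_mono (show 3 ≤ j by omega)
    have h3 : Nat.fib 3 = 2 := rfl
    omega
  have hKM : Nat.fib j < Nat.fib (j+1) := Nat.fib_lt_fib_succ (by omega)
  have hLu7 : 7 ≤ Nat.fib (j+2) + Nat.fib j := by
    have h := Nat.fib_mono (show 5 ≤ j+2 by omega)
    have h5 : Nat.fib 5 = 5 := rfl
    omega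
  have hsign : ((-1:ℝ))^j = -1 := hjo.neg_one_pow
  have hLuR : ((Nat.fib (j+2) + Nat.fib j : ℕ):ℝ) * aa^(j+1) = 1 + (aa^(j+1))^2 := by
    have h := Lu_eps j
    rw [hsign] at h
    rw [h]; ring
  have hepslt1 : aa^(j+1) < 1 := by linarith
  have heps_sq : (aa^(j+1))^2 < aa^(j+1) := by nlinarith
  have heps_half : aa^(j+1) < 1/2 := by nlinarith
  have hepsaa : (aa^(j+1))^2 + aa < 1 := by nlinarith
  have key : ∀ c : ℕ, 1 ≤ c → c ≤ Nat.fib (j+2) + Nat.fib j - 2 →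
      A (c*Nat.fib (j+1) + Nat.fib (j+1)) - A (c*Nat.fib (j+1)) = (Nat.fib j : ℤ) := by
    intro c hc1 hc2
    have hcnt := cnt j (c*Nat.fib (j+1))
    rw [hsign, neg_one_mul, ← sub_eq_add_neg] at hcnt
    have hfr := fract_nm j c
    rw [hsign, neg_one_mul] at hfr
    have hcR : (c:ℝ) ≤ ((Nat.fib (j+2) + Nat.fib j : ℕ):ℝ) - 2 := by
      have hq : ((c:ℕ):ℝ) ≤ ((Nat.fib (j+2) + Nat.fib j - 2:ℕ):ℝ) := by exact_mod_cast hc2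
      rw [Nat.cast_sub (by omega)] at hq
      exact_mod_cast hq
    have hc1R : (1:ℝ) ≤ (c:ℝ) := by exact_mod_cast hc1
    have hcub : (c:ℝ) * aa^(j+1) ≤ 1 + (aa^(j+1))^2 - 2*aa^(j+1) := by
      nlinarith
    have hclb : aa^(j+1) ≤ (c:ℝ) * aa^(j+1) := by nlinarith
    have hfr2 : Int.fract (((c*Nat.fib (j+1):ℕ):ℝ) * aa) = 1 - (c:ℝ) * aa^(j+1) := by
      rw [hfr]
      rw [show (c:ℝ) * (-(aa^(j+1))) = (1 - (c:ℝ)*aa^(j+1)) - ((1:ℤ):ℝ) by push_cast; ring,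
        Int.fract_sub_intCast]
      refine Int.fract_eq_self.mpr ⟨by nlinarith, by nlinarith⟩
    rw [hfr2] at hcnt
    have hfl : ⌊1 - (c:ℝ) * aa^(j+1) - aa^(j+1)⌋ = 0 := by
      rw [Int.floor_eq_zero_iff, Set.mem_Ico]
      constructor
      · nlinarith
      · nlinarith
    rw [hfl] at hcnt
    omega
  have hAm : A (Nat.fib (j+1)) = (Nat.fib j : ℤ) - 1 := by
    have hcnt := cnt j 0
    rw [hsign, neg_one_mul, ← sub_eq_add_neg] at hcnt
    simp only [Nat.cast_zero, zero_mul, Int.fract_zero, zero_add, A_zero, zero_sub] at hcnt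
    have hfl : ⌊-(aa^(j+1))⌋ = -1 := by
      rw [Int.floor_eq_iff]
      constructor
      · push_cast; linarith
      · push_cast; linarith
    rw [hfl] at hcnt
    omega
  have iA : (Nat.fib (j+2) + Nat.fib j - 1)*Nat.fib (j+1)
      = (Nat.fib (j+2) + Nat.fib j - 2)*Nat.fib (j+1) + Nat.fib (j+1) := by
    rw [show Nat.fib (j+2) + Nat.fib j - 1 = (Nat.fib (j+2) + Nat.fib j - 2)+1 by omega]
    ring
  have iB : (Nat.fib (j+2) + Nat.fib j)*Nat.fib (j+1)
      = (Nat.fib (j+2) + Nat.fib j - 1)*Nat.fib (j+1) + Nat.fib (j+1) := by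
    have h' : ((Nat.fib (j+2) + Nat.fib j - 1)+1)*Nat.fib (j+1)
        = (Nat.fib (j+2) + Nat.fib j - 1)*Nat.fib (j+1) + Nat.fib (j+1) := by ring
    rw [show (Nat.fib (j+2) + Nat.fib j - 1)+1 = Nat.fib (j+2) + Nat.fib j by omega] at h'
    exact h'
  have i2 : Nat.fib (j+1)*(Nat.fib (j+2) + Nat.fib j)
      = (Nat.fib (j+2) + Nat.fib j)*Nat.fib (j+1) := Nat.mul_comm _ _
  constructor
  · -- membership
    show IsAbelianRepPrefix aa (Nat.fib (j+1)) _
    have e4 : Nat.fib (j+1) ≤ (Nat.fib (j+2) + Nat.fib j - 2)*Nat.fib (j+1) := by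
      calc Nat.fib (j+1) = 1*Nat.fib (j+1) := (one_mul _).symm
        _ ≤ _ := Nat.mul_le_mul_right _ (by omega)
    have i5 : (Nat.fib (j+2) + Nat.fib j - 2 + 1)*Nat.fib (j+1)
        = (Nat.fib (j+2) + Nat.fib j - 1)*Nat.fib (j+1) := by
      rw [show Nat.fib (j+2) + Nat.fib j - 2 + 1 = Nat.fib (j+2) + Nat.fib j - 1 by omega]
    refine ⟨Nat.fib (j+1)-1, Nat.fib (j+2) + Nat.fib j-2, by omega, by omega, by omega,
      by omega, ?_, ?_, ?_⟩
    · -- blocks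
      intro t ht
      have i3 : (t+1)*Nat.fib (j+1) = t*Nat.fib (j+1) + Nat.fib (j+1) := by ring
      rw [show 1+(Nat.fib (j+1)-1)+t*Nat.fib (j+1) = (t+1)*Nat.fib (j+1) by omega,
        show 1+(Nat.fib (j+1)-1) = 1*Nat.fib (j+1) by omega]
      apply parikh_ext
      rw [key (t+1) (by omega) (by omega), key 1 (by omega) (by omega)]
    · -- head
      rw [show 1+(Nat.fib (j+1)-1) = 1*Nat.fib (j+1) by omega]
      have hfb := parikh_fst (1*Nat.fib (j+1)) (Nat.fib (j+1))
      rw [key 1 (by omega) (by omega)] at hfb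
      have hab := parikh_add (1*Nat.fib (j+1)) (Nat.fib (j+1))
      have hfh := parikh_fst 1 (Nat.fib (j+1)-1)
      rw [show 1+(Nat.fib (j+1)-1) = Nat.fib (j+1) by omega, hAm, A_one] at hfh
      have hah := parikh_add 1 (Nat.fib (j+1)-1)
      constructor
      · omega
      · omega
    · -- tail
      rw [show 1+(Nat.fib (j+1)-1)+(Nat.fib (j+2) + Nat.fib j-2)*Nat.fib (j+1)
            = (Nat.fib (j+2) + Nat.fib j - 1)*Nat.fib (j+1) by omega,
        show Nat.fib (j+1)*(Nat.fib (j+2) + Nat.fib j) - 2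
            - ((Nat.fib (j+1)-1) + (Nat.fib (j+2) + Nat.fib j-2)*Nat.fib (j+1))
            = Nat.fib (j+1)-1 by omega,
        show 1+(Nat.fib (j+1)-1) = 1*Nat.fib (j+1) by omega]
      have hft := parikh_fst ((Nat.fib (j+2) + Nat.fib j - 1)*Nat.fib (j+1)) (Nat.fib (j+1)-1)
      have hcntt := cnt_tail j ((Nat.fib (j+2) + Nat.fib j - 1)*Nat.fib (j+1))
      rw [hsign, neg_one_mul] at hcntt
      have hfr := fract_nm j (Nat.fib (j+2) + Nat.fib j - 1)
      rw [hsign, neg_one_mul] at hfr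
      have hyv : ((Nat.fib (j+2) + Nat.fib j - 1:ℕ):ℝ) * (-(aa^(j+1)))
          = (aa^(j+1) - (aa^(j+1))^2) - ((1:ℤ):ℝ) := by
        rw [Nat.cast_sub (by omega)]
        push_cast
        push_cast at hLuR
        linear_combination (-1:ℝ) * hLuR
      have hfr2 : Int.fract ((((Nat.fib (j+2) + Nat.fib j - 1)*Nat.fib (j+1):ℕ):ℝ) * aa)
          = aa^(j+1) - (aa^(j+1))^2 := by
        rw [hfr, hyv, Int.fract_sub_intCast]
        refine Int.fract_eq_self.mpr ⟨by nlinarith, by nlinarith⟩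
      rw [hfr2] at hcntt
      have hfl : ⌊aa^(j+1) - (aa^(j+1))^2 + (-(aa^(j+1)) - aa)⌋ = -1 := by
        rw [Int.floor_eq_iff]
        constructor
        · push_cast; nlinarith
        · push_cast; nlinarith
      rw [hfl] at hcntt
      have hat := parikh_add ((Nat.fib (j+2) + Nat.fib j - 1)*Nat.fib (j+1)) (Nat.fib (j+1)-1)
      have hfb := parikh_fst (1*Nat.fib (j+1)) (Nat.fib (j+1))
      rw [key 1 (by omega) (by omega)] at hfb
      have hab := parikh_add (1*Nat.fib (j+1)) (Nat.fib (j+1))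
      constructor
      · omega
      · omega
  · -- upper bound
    intro L hL
    obtain ⟨h, b, hh, hb2, hlb, hub, hblocks, _, _⟩ := hL
    set θ := Int.fract (((1+h:ℕ):ℝ) * aa) with hθdef
    have hBA := BA' j (1+h) (by omega) (by omega) (by omega)
    have hθ0 : 0 ≤ θ := Int.fract_nonneg _
    have hθ1 : θ < 1 := Int.fract_lt_one _
    have hθe : θ ≤ 1 - aa^(j+1) := hBA.2
    have hfl : ∀ t, t < b →
        ⌊Int.fract (((1+h+t*Nat.fib (j+1):ℕ):ℝ) * aa) - aa^(j+1)⌋ = ⌊θ - aa^(j+1)⌋ := by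
      intro t ht
      have hp := hblocks t ht
      have h1 := parikh_fst (1+h+t*Nat.fib (j+1)) (Nat.fib (j+1))
      have h2 := parikh_fst (1+h) (Nat.fib (j+1))
      rw [hp] at h1
      have hc1 := cnt j (1+h+t*Nat.fib (j+1))
      have hc2 := cnt j (1+h)
      rw [hsign, neg_one_mul, ← sub_eq_add_neg] at hc1 hc2
      rw [← hθdef] at hc2
      omega
    have hstep0 : ⌊θ - aa^(j+1)⌋ = 0 := by
      rcases le_or_gt (aa^(j+1)) θ with hcase | hcase
      · rw [Int.floor_eq_zero_iff, Set.mem_Ico]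
        exact ⟨by linarith, by linarith⟩
      · exfalso
        have hRm1 : ⌊θ - aa^(j+1)⌋ = -1 := by
          rw [Int.floor_eq_iff]
          constructor
          · push_cast; linarith
          · push_cast; linarith
        have hfr1 : Int.fract (((1+h+1*Nat.fib (j+1):ℕ):ℝ) * aa) = θ - aa^(j+1) + 1 := by
          rw [show 1+h+1*Nat.fib (j+1) = (1+h)+Nat.fib (j+1) by ring]
          rw [fract_step j (1+h), hsign, neg_one_mul, ← sub_eq_add_neg, ← hθdef]
          rw [← Int.self_sub_floor, hRm1]
          push_cast
          ring
        have hf1 := hfl 1 (by omega)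
        rw [hfr1] at hf1
        have hL0 : ⌊θ - aa^(j+1) + 1 - aa^(j+1)⌋ = 0 := by
          rw [Int.floor_eq_zero_iff, Set.mem_Ico]
          constructor
          · linarith
          · linarith
        omega
    have hθge : aa^(j+1) ≤ θ := by
      rw [Int.floor_eq_zero_iff, Set.mem_Ico] at hstep0
      linarith [hstep0.1]
    have hstepB : ∀ t, t < b →
        Int.fract (((1+h+t*Nat.fib (j+1):ℕ):ℝ) * aa) = θ - t*aa^(j+1) ∧
        aa^(j+1) ≤ θ - t*aa^(j+1) := by
      intro t
      induction t with
      | zero =>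
        intro _
        constructor
        · rw [show 1+h+0*Nat.fib (j+1) = 1+h by ring, ← hθdef]
          push_cast
          ring
        · push_cast
          linarith
      | succ t ih =>
        intro ht
        obtain ⟨ihf, ihge⟩ := ih (by omega)
        have htnn : (0:ℝ) ≤ (t:ℝ)*aa^(j+1) := by positivity
        have hfr : Int.fract (((1+h+(t+1)*Nat.fib (j+1):ℕ):ℝ) * aa)
            = θ - (t+1:ℕ)*aa^(j+1) := by
          rw [show 1+h+(t+1)*Nat.fib (j+1) = (1+h+t*Nat.fib (j+1))+Nat.fib (j+1) by ring]
          rw [fract_step j (1+h+t*Nat.fib (j+1)), hsign, neg_one_mul, ← sub_eq_add_neg, ihf]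
          rw [Int.fract_eq_self.mpr ⟨by linarith, by linarith⟩]
          push_cast
          ring
        have hf := hfl (t+1) ht
        rw [hfr] at hf
        rw [hstep0] at hf
        rw [Int.floor_eq_zero_iff, Set.mem_Ico] at hf
        refine ⟨hfr, ?_⟩
        have h1' := hf.1
        push_cast at h1' ⊢
        linarith
    have hfin := hstepB (b-1) (by omega)
    have hcast : ((b-1:ℕ):ℝ) = (b:ℝ) - 1 := by
      rw [Nat.cast_sub (by omega)]; norm_num
    have hbound : ((b:ℝ)+1) * aa^(j+1) ≤ 1 := by
      have h2' := hfin.2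
      rw [hcast] at h2'
      nlinarith
    have hblt : (b:ℝ) + 1 < ((Nat.fib (j+2) + Nat.fib j:ℕ):ℝ) := by
      have h1' : ((b:ℝ)+1) * aa^(j+1) < ((Nat.fib (j+2) + Nat.fib j:ℕ):ℝ) * aa^(j+1) := by
        nlinarith
      exact lt_of_mul_lt_mul_right (by linarith [h1']) heps_pos.le
    have hbn : b + 1 < Nat.fib (j+2) + Nat.fib j := by exact_mod_cast hblt
    have hmul : (b+1)*Nat.fib (j+1) ≤ (Nat.fib (j+2) + Nat.fib j - 1)*Nat.fib (j+1) :=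
      Nat.mul_le_mul_right _ (by omega)
    omega

/-- For `j > 1`, the longest prefix of the Fibonacci infinite word (the
Sturmian word of slope `α = φ - 1`) that is an abelian repetition of period `F j` has
length `F_j(F_{j+1} + F_{j-1} + 1) - 2` if `j` is even and `F_j(F_{j+1} + F_{j-1}) - 2`
if `j` is odd. -/
theorem fibonacci_longest_abelian_rep_prefix (j : ℕ) (hj : 1 < j) :
    IsGreatest {L : ℕ | IsAbelianRepPrefix ((Real.sqrt 5 - 1) / 2) (F j) L}
      (if Even j then F j * (F (j + 1) + F (j - 1) + 1) - 2
       else F j * (F (j + 1) + F (j - 1)) - 2) := by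
  have haa : ((Real.sqrt 5 - 1)/2 : ℝ) = aa := rfl
  rw [haa]
  have hF : F j = Nat.fib (j+1) := rfl
  have hF1 : F (j+1) = Nat.fib (j+2) := rfl
  have hFm : F (j-1) = Nat.fib j := by
    unfold F
    congr 1
    omega
  rcases Nat.even_or_odd j with he | ho
  · rw [if_pos he, hF, hF1, hFm]
    exact main_even j (by omega) he
  · rw [if_neg (by simpa [Nat.not_even_iff_odd] using ho), hF, hF1, hFm]
    have h3 : 3 ≤ j := by
      have := Nat.odd_iff.mp ho
      omega
    exact main_odd j h3 ho
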